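/- Let 0 ≤ γ < 1 and let w be a weight on ℝ^{n+1}. Then w ∈ A_1^+(γ) if and only if there exists a constant C > 0 such that M^{γ−}w(x,t) ≤ C·w(x,t) for almost every (x,t) ∈ ℝ^{n+1}; moreover, when w ∈ A_1^+(γ) one can take C = [w]_{A_1^+(γ)}. -/

import Mathlib

open MeasureTheory ENNReal Set

noncomputable section

/-- The closed spatial cube `Q(x,L)` with center `x` and side length `L`. -/
def spCube (n : ℕ) (x : Fin n → ℝ) (L : ℝ) : Set (Fin n → ℝ) :=
  {y | ∀ i, |y i - x i| ≤ L}

/-- The parabolic rectangle `R(x,t,L) = Q(x,L) × (t - L^p, t + L^p)`. -/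
def pRect (n : ℕ) (p : ℝ) (x : Fin n → ℝ) (t L : ℝ) : Set ((Fin n → ℝ) × ℝ) :=
  (spCube n x L) ×ˢ (Set.Ioo (t - L ^ p) (t + L ^ p))

/-- The upper part `R^+(γ) = Q(x,L) × (t + γL^p, t + L^p)` of the parabolic rectangle. -/
def pRectPlus (n : ℕ) (p : ℝ) (x : Fin n → ℝ) (t L γ : ℝ) : Set ((Fin n → ℝ) × ℝ) :=
  (spCube n x L) ×ˢ (Set.Ioo (t + γ * L ^ p) (t + L ^ p))

/-- The lower part `R^-(γ) = Q(x,L) × (t - L^p, t - γL^p)` of the parabolic rectangle. -/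
def pRectMinus (n : ℕ) (p : ℝ) (x : Fin n → ℝ) (t L γ : ℝ) : Set ((Fin n → ℝ) × ℝ) :=
  (spCube n x L) ×ˢ (Set.Ioo (t - L ^ p) (t - γ * L ^ p))

/-- The time translate `A + (0,s) = {(y, r + s) : (y,r) ∈ A}`. -/
def tAdd (n : ℕ) (A : Set ((Fin n → ℝ) × ℝ)) (s : ℝ) : Set ((Fin n → ℝ) × ℝ) :=
  {z | (z.1, z.2 - s) ∈ A}

/-- A weight: a nonnegative (`ℝ≥0∞`-valued) a.e. measurable, locally integrable function. -/
def IsWeight (n : ℕ) (w : (Fin n → ℝ) × ℝ → ℝ≥0∞) : Prop :=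
  AEMeasurable w (volume : Measure ((Fin n → ℝ) × ℝ)) ∧
    ∀ K : Set ((Fin n → ℝ) × ℝ), IsCompact K → ∫⁻ z in K, w z ∂volume < ⊤

/-- `C` is an admissible constant in the parabolic Muckenhoupt `A_q^+(γ)` condition (`1 < q`). -/
def IsAqPlusConst (n : ℕ) (p q γ : ℝ) (w : (Fin n → ℝ) × ℝ → ℝ≥0∞) (C : ℝ≥0∞) : Prop :=
  ∀ (x : Fin n → ℝ) (t L : ℝ), 0 < L →
    (⨍⁻ z in pRectMinus n p x t L γ, w z ∂volume) *
      (⨍⁻ z in pRectPlus n p x t L γ, w z ^ (1 / (1 - q)) ∂volume) ^ (q - 1) ≤ C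

/-- `C` is an admissible constant in the parabolic Muckenhoupt `A_q^-(γ)` condition (`1 < q`),
i.e. the condition with the time direction reversed. -/
def IsAqMinusConst (n : ℕ) (p q γ : ℝ) (w : (Fin n → ℝ) × ℝ → ℝ≥0∞) (C : ℝ≥0∞) : Prop :=
  ∀ (x : Fin n → ℝ) (t L : ℝ), 0 < L →
    (⨍⁻ z in pRectPlus n p x t L γ, w z ∂volume) *
      (⨍⁻ z in pRectMinus n p x t L γ, w z ^ (1 / (1 - q)) ∂volume) ^ (q - 1) ≤ C

/-- The parabolic Muckenhoupt class `A_q^+(γ)` for `1 < q`. -/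
def MemAqPlus (n : ℕ) (p q γ : ℝ) (w : (Fin n → ℝ) × ℝ → ℝ≥0∞) : Prop :=
  ∃ C : ℝ≥0∞, C ≠ ⊤ ∧ IsAqPlusConst n p q γ w C

/-- The parabolic Muckenhoupt class `A_q^-(γ)` for `1 < q`. -/
def MemAqMinus (n : ℕ) (p q γ : ℝ) (w : (Fin n → ℝ) × ℝ → ℝ≥0∞) : Prop :=
  ∃ C : ℝ≥0∞, C ≠ ⊤ ∧ IsAqMinusConst n p q γ w C

/-- `C` is an admissible constant in the parabolic Muckenhoupt `A_1^+(γ)` condition. -/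
def IsA1PlusConst (n : ℕ) (p γ : ℝ) (w : (Fin n → ℝ) × ℝ → ℝ≥0∞) (C : ℝ≥0∞) : Prop :=
  ∀ (x : Fin n → ℝ) (t L : ℝ), 0 < L →
    (⨍⁻ z in pRectMinus n p x t L γ, w z ∂volume) ≤
      C * essInf w (volume.restrict (pRectPlus n p x t L γ))

/-- `C` is an admissible constant in the parabolic Muckenhoupt `A_1^-(γ)` condition. -/
def IsA1MinusConst (n : ℕ) (p γ : ℝ) (w : (Fin n → ℝ) × ℝ → ℝ≥0∞) (C : ℝ≥0∞) : Prop :=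
  ∀ (x : Fin n → ℝ) (t L : ℝ), 0 < L →
    (⨍⁻ z in pRectPlus n p x t L γ, w z ∂volume) ≤
      C * essInf w (volume.restrict (pRectMinus n p x t L γ))

/-- The parabolic Muckenhoupt class `A_1^+(γ)`. -/
def MemA1Plus (n : ℕ) (p γ : ℝ) (w : (Fin n → ℝ) × ℝ → ℝ≥0∞) : Prop :=
  ∃ C : ℝ≥0∞, 0 < C ∧ C ≠ ⊤ ∧ IsA1PlusConst n p γ w C

/-- The parabolic Muckenhoupt class `A_1^-(γ)`. -/
def MemA1Minus (n : ℕ) (p γ : ℝ) (w : (Fin n → ℝ) × ℝ → ℝ≥0∞) : Prop :=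
  ∃ C : ℝ≥0∞, 0 < C ∧ C ≠ ⊤ ∧ IsA1MinusConst n p γ w C

/-- Unified admissible `A_q^+(γ)` constant for `1 ≤ q < ∞`. -/
def IsAPlusConst (n : ℕ) (p q γ : ℝ) (w : (Fin n → ℝ) × ℝ → ℝ≥0∞) (C : ℝ≥0∞) : Prop :=
  if q = 1 then IsA1PlusConst n p γ w C else IsAqPlusConst n p q γ w C

/-- Unified parabolic Muckenhoupt class `A_q^+(γ)` for `1 ≤ q < ∞`. -/
def MemAPlus (n : ℕ) (p q γ : ℝ) (w : (Fin n → ℝ) × ℝ → ℝ≥0∞) : Prop :=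
  ∃ C : ℝ≥0∞, C ≠ ⊤ ∧ IsAPlusConst n p q γ w C

/-- The uncentered forward-in-time parabolic maximal function `M^{γ+}g`. -/
def MaxPlus (n : ℕ) (p γ : ℝ) (g : (Fin n → ℝ) × ℝ → ℝ≥0∞) (z : (Fin n → ℝ) × ℝ) : ℝ≥0∞ :=
  ⨆ (x : Fin n → ℝ) (t : ℝ) (L : ℝ) (_ : 0 < L) (_ : z ∈ pRectMinus n p x t L γ),
    ⨍⁻ y in pRectPlus n p x t L γ, g y ∂volume

/-- The uncentered backward-in-time parabolic maximal function `M^{γ-}g`. -/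
def MaxMinus (n : ℕ) (p γ : ℝ) (g : (Fin n → ℝ) × ℝ → ℝ≥0∞) (z : (Fin n → ℝ) × ℝ) : ℝ≥0∞ :=
  ⨆ (x : Fin n → ℝ) (t : ℝ) (L : ℝ) (_ : 0 < L) (_ : z ∈ pRectPlus n p x t L γ),
    ⨍⁻ y in pRectMinus n p x t L γ, g y ∂volume

/-- The qualitative measure condition with parameters `(γ, α, β)`:
for every parabolic rectangle `R` and every measurable `E ⊆ R^+(γ)` with
`w(E) < β·w(R^-(γ))` one has `|E| < α·|R^+(γ)|`. -/
def QualMeasCond (n : ℕ) (p γ α β : ℝ) (w : (Fin n → ℝ) × ℝ → ℝ≥0∞) : Prop :=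
  ∀ (x : Fin n → ℝ) (t L : ℝ), 0 < L →
    ∀ E : Set ((Fin n → ℝ) × ℝ), E ⊆ pRectPlus n p x t L γ → MeasurableSet E →
      (∫⁻ z in E, w z ∂volume) <
          ENNReal.ofReal β * ∫⁻ z in pRectMinus n p x t L γ, w z ∂volume →
        volume E < ENNReal.ofReal α * volume (pRectPlus n p x t L γ)

end

noncomputable section Aux

open MeasureTheory ENNReal Set

lemma spCube_eq (n : ℕ) (x : Fin n → ℝ) (L : ℝ) :
    spCube n x L = Set.pi Set.univ (fun i => Icc (x i - L) (x i + L)) := by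
  ext y
  simp only [spCube, mem_setOf_eq, Set.mem_pi, Set.mem_univ, forall_true_left, mem_Icc,
    abs_sub_le_iff]
  exact forall_congr' fun i => by constructor <;> rintro ⟨h1, h2⟩ <;> constructor <;> linarith

lemma measurableSet_spCube (n : ℕ) (x : Fin n → ℝ) (L : ℝ) :
    MeasurableSet (spCube n x L) := by
  rw [spCube_eq]
  exact MeasurableSet.univ_pi fun i => measurableSet_Icc

lemma measurableSet_pRectPlus (n : ℕ) (p : ℝ) (x : Fin n → ℝ) (t L γ : ℝ) :
    MeasurableSet (pRectPlus n p x t L γ) :=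
  (measurableSet_spCube n x L).prod measurableSet_Ioo

lemma volume_spCube (n : ℕ) (x : Fin n → ℝ) (L : ℝ) :
    volume (spCube n x L) = ENNReal.ofReal (2 * L) ^ n := by
  rw [spCube_eq, volume_pi_pi]
  have h : ∀ i : Fin n, volume (Icc (x i - L) (x i + L)) = ENNReal.ofReal (2 * L) := fun i => by
    rw [Real.volume_Icc]; congr 1; ring
  rw [Finset.prod_congr rfl fun i _ => h i, Finset.prod_const, Finset.card_univ,
    Fintype.card_fin]

lemma volume_pRectMinus (n : ℕ) (p : ℝ) (x : Fin n → ℝ) (t L γ : ℝ) :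
    volume (pRectMinus n p x t L γ) =
      ENNReal.ofReal (2 * L) ^ n * ENNReal.ofReal ((1 - γ) * L ^ p) := by
  rw [pRectMinus, Measure.volume_eq_prod, Measure.prod_prod, volume_spCube, Real.volume_Ioo]
  congr 2
  ring

lemma volume_pRectMinus_pos (n : ℕ) (p : ℝ) (x : Fin n → ℝ) (t L γ : ℝ)
    (hL : 0 < L) (hγ1 : γ < 1) : volume (pRectMinus n p x t L γ) ≠ 0 := by
  rw [volume_pRectMinus]
  have h1 : (0:ℝ) < 2 * L := by linarith
  have h2 : (0:ℝ) < (1 - γ) * L ^ p := by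
    have := Real.rpow_pos_of_pos hL p
    nlinarith
  have e1 : ENNReal.ofReal (2 * L) ≠ 0 := by
    simp only [ne_eq, ENNReal.ofReal_eq_zero, not_le]; exact h1
  have e2 : ENNReal.ofReal ((1 - γ) * L ^ p) ≠ 0 := by
    simp only [ne_eq, ENNReal.ofReal_eq_zero, not_le]; exact h2
  exact mul_ne_zero (pow_ne_zero _ e1) e2

lemma volume_pRectMinus_ne_top (n : ℕ) (p : ℝ) (x : Fin n → ℝ) (t L γ : ℝ) :
    volume (pRectMinus n p x t L γ) ≠ ⊤ := by
  rw [volume_pRectMinus]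
  exact ENNReal.mul_ne_top (pow_ne_top ENNReal.ofReal_ne_top) ENNReal.ofReal_ne_top

lemma ennreal_le_of_forall_eps {a b : ℝ≥0∞}
    (h : ∀ ε : ℝ, 0 < ε → a ≤ ENNReal.ofReal (1 + ε) * b) : a ≤ b := by
  by_cases hb : b = ⊤
  · simp [hb]
  by_cases hb0 : b = 0
  · have := h 1 one_pos
    rw [hb0, mul_zero] at this
    exact this.trans zero_le
  lift b to NNReal using hb
  have hb0' : b ≠ 0 := by exact_mod_cast hb0
  have hbR : (0:ℝ) < (b:ℝ) := NNReal.coe_pos.2 (lt_of_le_of_ne zero_le (Ne.symm hb0'))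
  refine ENNReal.le_of_forall_pos_le_add fun ε hε _ => ?_
  have hεR : (0:ℝ) < (ε:ℝ) := hε
  have hδ : (0:ℝ) < (ε:ℝ) / (b:ℝ) := div_pos hεR hbR
  calc a ≤ ENNReal.ofReal (1 + (ε:ℝ)/(b:ℝ)) * (b : ℝ≥0∞) := h _ hδ
    _ = (b:ℝ≥0∞) + ENNReal.ofReal ((ε:ℝ)/(b:ℝ)) * ENNReal.ofReal (b:ℝ) := by
        rw [ENNReal.ofReal_add one_pos.le hδ.le, ENNReal.ofReal_one, add_mul, one_mul,
          ENNReal.ofReal_coe_nnreal]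
    _ = (b:ℝ≥0∞) + (ε:ℝ≥0∞) := by
        rw [← ENNReal.ofReal_mul hδ.le, div_mul_cancel₀ _ hbR.ne', ENNReal.ofReal_coe_nnreal]

set_option maxHeartbeats 1000000 in
lemma approx (n : ℕ) (p : ℝ) (hp : 1 < p) (γ : ℝ) (hγ0 : 0 ≤ γ) (hγ1 : γ < 1)
    (z : (Fin n → ℝ) × ℝ) (x : Fin n → ℝ) (t L : ℝ) (hL : 0 < L)
    (hz : z ∈ pRectPlus n p x t L γ) (ε : ℝ) (hε : 0 < ε) :
    ∃ (x' : Fin n → ℚ) (t' L' : ℚ), 0 < ((L' : ℝ)) ∧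
      z ∈ pRectPlus n p (fun i => ((x' i : ℝ))) ((t' : ℝ)) ((L' : ℝ)) γ ∧
      pRectMinus n p x t L γ ⊆ pRectMinus n p (fun i => ((x' i : ℝ))) ((t' : ℝ)) ((L' : ℝ)) γ ∧
      volume (pRectMinus n p (fun i => ((x' i : ℝ))) ((t' : ℝ)) ((L' : ℝ)) γ) ≤
        ENNReal.ofReal (1 + ε) * volume (pRectMinus n p x t L γ) := by
  have hp0 : (0:ℝ) < p := by linarith
  obtain ⟨hzQ, hzT⟩ := hz
  obtain ⟨hs1, hs2⟩ := hzT
  have hLp : 0 < L ^ p := Real.rpow_pos_of_pos hL p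
  -- the time margin
  set c : ℝ := (z.2 - t - γ * L ^ p) / (1 + γ) with hc_def
  have hc : 0 < c := div_pos (by linarith) (by linarith)
  have hcγ : (1 + γ) * c = z.2 - t - γ * L ^ p := by
    rw [hc_def, mul_div_cancel₀]
    linarith
  -- the size dilation factor
  set m : ℝ := (1 + ε) ^ (((n : ℝ) + p)⁻¹) with hm_def
  have hnp : (0:ℝ) < (n : ℝ) + p := by positivity
  have hm1 : 1 < m := by
    rw [hm_def, Real.one_lt_rpow_iff_of_pos (by linarith)]
    exact Or.inl ⟨by linarith, by positivity⟩
  have hm0 : 0 < m := lt_trans one_pos hm1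
  -- choose L'
  have hB1 : L < L * m := by nlinarith
  have hB2 : L < (L ^ p + c) ^ p⁻¹ := by
    conv_lhs => rw [← Real.rpow_rpow_inv hL.le hp0.ne']
    exact Real.rpow_lt_rpow (by positivity) (by linarith) (by positivity)
  obtain ⟨L', hL'1, hL'2⟩ := exists_rat_btwn (lt_min hB1 hB2)
  have hL'pos : 0 < (L' : ℝ) := hL.trans hL'1
  have hL'm : (L' : ℝ) ≤ L * m := le_trans hL'2.le (min_le_left _ _)
  have hL'p_lt : ((L' : ℝ)) ^ p < L ^ p + c := by
    have h := Real.rpow_lt_rpow hL'pos.le (lt_of_lt_of_le hL'2 (min_le_right _ _)) hp0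
    rwa [Real.rpow_inv_rpow (by positivity) hp0.ne'] at h
  set a : ℝ := ((L' : ℝ)) ^ p - L ^ p with ha_def
  have ha : 0 < a := by
    have := Real.rpow_lt_rpow hL.le hL'1 hp0
    simp only [ha_def]; linarith
  have hac : a < c := by simp only [ha_def]; linarith
  -- choose t'
  obtain ⟨t', ht'1, ht'2⟩ := exists_rat_btwn (show t + γ * a < t + a by nlinarith)
  -- choose x'
  have hx'ex : ∀ i : Fin n, ∃ q : ℚ, x i - ((L' : ℝ) - L) < (q : ℝ) ∧
      (q : ℝ) < x i + ((L' : ℝ) - L) := fun i => exists_rat_btwn (by linarith)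
  choose x' hx'1 hx'2 using hx'ex
  have hQ : spCube n x L ⊆ spCube n (fun i => ((x' i : ℝ))) ((L' : ℝ)) := by
    intro y hy i
    have h1 := hy i
    have h2 := hx'1 i
    have h3 := hx'2 i
    rw [abs_sub_le_iff] at h1 ⊢
    obtain ⟨ha1, ha2⟩ := h1
    constructor <;> linarith
  have hLpa : ((L' : ℝ)) ^ p = L ^ p + a := by simp only [ha_def]; ring
  have hγa : 0 ≤ γ * a := mul_nonneg hγ0 ha.le
  have hγac : (1 + γ) * a < (1 + γ) * c :=
    mul_lt_mul_of_pos_left hac (by linarith)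
  have hmem : z ∈ pRectPlus n p (fun i => ((x' i : ℝ))) ((t' : ℝ)) ((L' : ℝ)) γ := by
    simp only [pRectPlus, Set.mem_prod, Set.mem_Ioo]
    refine ⟨hQ hzQ, ?_, ?_⟩
    · rw [hLpa]; nlinarith
    · rw [hLpa]; nlinarith
  have hsub : pRectMinus n p x t L γ ⊆
      pRectMinus n p (fun i => ((x' i : ℝ))) ((t' : ℝ)) ((L' : ℝ)) γ := by
    simp only [pRectMinus]
    refine Set.prod_mono hQ (Set.Ioo_subset_Ioo ?_ ?_) <;> rw [hLpa] <;> nlinarith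
  refine ⟨x', t', L', hL'pos, hmem, hsub, ?_⟩
  · -- volume bound
    rw [volume_pRectMinus, volume_pRectMinus]
    have h2L : (0:ℝ) ≤ 2 * L := by linarith
    have h2L' : (0:ℝ) ≤ 2 * (L' : ℝ) := by linarith
    rw [← ENNReal.ofReal_pow h2L, ← ENNReal.ofReal_pow h2L',
      ← ENNReal.ofReal_mul (by positivity), ← ENNReal.ofReal_mul (by positivity),
      ← ENNReal.ofReal_mul (by linarith)]
    apply ENNReal.ofReal_le_ofReal
    -- real inequality
    have hmnp : m ^ ((n : ℝ)) * m ^ p = 1 + ε := by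
      rw [← Real.rpow_add hm0, hm_def, Real.rpow_inv_rpow (by linarith) hnp.ne']
    have hcube : (2 * (L' : ℝ)) ^ n ≤ (2 * L) ^ n * m ^ ((n : ℝ)) := by
      rw [Real.rpow_natCast, ← mul_pow]
      apply pow_le_pow_left₀ h2L'
      nlinarith
    have htime : (1 - γ) * ((L' : ℝ)) ^ p ≤ ((1 - γ) * L ^ p) * m ^ p := by
      have hLm : ((L' : ℝ)) ^ p ≤ (L * m) ^ p :=
        Real.rpow_le_rpow hL'pos.le hL'm hp0.le
      rw [Real.mul_rpow hL.le hm0.le] at hLm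
      nlinarith
    calc (2 * (L' : ℝ)) ^ n * ((1 - γ) * ((L' : ℝ)) ^ p)
        ≤ ((2 * L) ^ n * m ^ ((n : ℝ))) * (((1 - γ) * L ^ p) * m ^ p) := by
          apply mul_le_mul hcube htime (by nlinarith [Real.rpow_pos_of_pos hL'pos p]) (by positivity)
      _ = (m ^ ((n : ℝ)) * m ^ p) * ((2 * L) ^ n * ((1 - γ) * L ^ p)) := by ring
      _ = (1 + ε) * ((2 * L) ^ n * ((1 - γ) * L ^ p)) := by rw [hmnp]

set_option maxHeartbeats 1000000 in
lemma main_pointwise (n : ℕ) (p : ℝ) (hp : 1 < p) (γ : ℝ) (hγ0 : 0 ≤ γ) (hγ1 : γ < 1)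
    (w : (Fin n → ℝ) × ℝ → ℝ≥0∞) (C : ℝ≥0∞) (hC : IsA1PlusConst n p γ w C) :
    ∀ᵐ z ∂(volume : Measure ((Fin n → ℝ) × ℝ)), MaxMinus n p γ w z ≤ C * w z := by
  classical
  set S : (Fin n → ℚ) × ℚ × ℚ → Set ((Fin n → ℝ) × ℝ) := fun q =>
    pRectPlus n p (fun i => ((q.1 i : ℝ))) ((q.2.1 : ℝ)) ((q.2.2 : ℝ)) γ with hS_def
  set N : (Fin n → ℚ) × ℚ × ℚ → Set ((Fin n → ℝ) × ℝ) := fun q =>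
    {z | z ∈ S q ∧ w z < essInf w (volume.restrict (S q))} with hN_def
  have hNnull : ∀ q, volume (N q) = 0 := by
    intro q
    have h := ae_essInf_le (f := w) (μ := volume.restrict (S q))
    rw [ae_iff] at h
    rw [Measure.restrict_apply' (measurableSet_pRectPlus n p _ _ _ γ)] at h
    refine measure_mono_null ?_ h
    intro z hz
    exact ⟨not_le.2 hz.2, hz.1⟩
  have hnull : volume (⋃ q, N q) = 0 := measure_iUnion_null hNnull
  filter_upwards [measure_eq_zero_iff_ae_notMem.mp hnull] with z hz
  refine iSup_le fun x => iSup_le fun t => iSup_le fun L => iSup_le fun hL =>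
    iSup_le fun hzR => ?_
  apply ennreal_le_of_forall_eps
  intro ε hε
  obtain ⟨x', t', L', hL'pos, hzR', hsub, hvol⟩ :=
    approx n p hp γ hγ0 hγ1 z x t L hL hzR ε hε
  set q : (Fin n → ℚ) × ℚ × ℚ := (x', t', L') with hq_def
  have hzq : z ∈ S q := hzR'
  have hgood : essInf w (volume.restrict (S q)) ≤ w z := by
    by_contra hcon
    exact hz (Set.mem_iUnion.2 ⟨q, hzq, not_le.1 hcon⟩)
  have havg : (⨍⁻ y in pRectMinus n p (fun i => ((x' i : ℝ))) ((t' : ℝ)) ((L' : ℝ)) γ,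
      w y ∂volume) ≤ C * w z :=
    (hC (fun i => ((x' i : ℝ))) ((t' : ℝ)) ((L' : ℝ)) hL'pos).trans
      (mul_le_mul_right hgood C)
  have hV0 : volume (pRectMinus n p x t L γ) ≠ 0 := volume_pRectMinus_pos n p x t L γ hL hγ1
  have hVt : volume (pRectMinus n p x t L γ) ≠ ⊤ := volume_pRectMinus_ne_top n p x t L γ
  have hV'0 : volume (pRectMinus n p (fun i => ((x' i : ℝ))) ((t' : ℝ)) ((L' : ℝ)) γ) ≠ 0 :=
    volume_pRectMinus_pos n p _ _ _ γ hL'pos hγ1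
  have hV't : volume (pRectMinus n p (fun i => ((x' i : ℝ))) ((t' : ℝ)) ((L' : ℝ)) γ) ≠ ⊤ :=
    volume_pRectMinus_ne_top n p _ _ _ γ
  calc (⨍⁻ y in pRectMinus n p x t L γ, w y ∂volume)
      = (∫⁻ y in pRectMinus n p x t L γ, w y ∂volume) / volume (pRectMinus n p x t L γ) := by
        rw [setLAverage_eq]
    _ ≤ (∫⁻ y in pRectMinus n p (fun i => ((x' i : ℝ))) ((t' : ℝ)) ((L' : ℝ)) γ,
          w y ∂volume) / volume (pRectMinus n p x t L γ) :=
        ENNReal.div_le_div_right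
          (lintegral_mono' (Measure.restrict_mono hsub le_rfl) le_rfl) _
    _ = ((⨍⁻ y in pRectMinus n p (fun i => ((x' i : ℝ))) ((t' : ℝ)) ((L' : ℝ)) γ,
          w y ∂volume) * volume (pRectMinus n p (fun i => ((x' i : ℝ))) ((t' : ℝ)) ((L' : ℝ)) γ))
          / volume (pRectMinus n p x t L γ) := by
        rw [setLAverage_eq, ENNReal.div_mul_cancel hV'0 hV't]
    _ ≤ ((C * w z) * (ENNReal.ofReal (1 + ε) * volume (pRectMinus n p x t L γ)))
          / volume (pRectMinus n p x t L γ) :=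
        ENNReal.div_le_div_right (mul_le_mul' havg hvol) _
    _ = ((C * w z) * ENNReal.ofReal (1 + ε)) *
          (volume (pRectMinus n p x t L γ) / volume (pRectMinus n p x t L γ)) := by
        rw [← mul_assoc, mul_div_assoc]
    _ = (C * w z) * ENNReal.ofReal (1 + ε) := by rw [ENNReal.div_self hV0 hVt, mul_one]
    _ = ENNReal.ofReal (1 + ε) * (C * w z) := mul_comm _ _

end Aux

theorem statement0 (n : ℕ) (hn : 1 ≤ n) (p : ℝ) (hp : 1 < p) (γ : ℝ)
    (hγ0 : 0 ≤ γ) (hγ1 : γ < 1)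
    (w : (Fin n → ℝ) × ℝ → ℝ≥0∞) (hw : IsWeight n w) :
    (MemA1Plus n p γ w ↔
      ∃ C : ℝ≥0∞, 0 < C ∧ C ≠ ⊤ ∧
        ∀ᵐ z ∂(volume : Measure ((Fin n → ℝ) × ℝ)), MaxMinus n p γ w z ≤ C * w z) ∧
    ∀ C : ℝ≥0∞, IsA1PlusConst n p γ w C →
      ∀ᵐ z ∂(volume : Measure ((Fin n → ℝ) × ℝ)), MaxMinus n p γ w z ≤ C * w z := by
  have main := main_pointwise n p hp γ hγ0 hγ1 w
  refine ⟨⟨?_, ?_⟩, main⟩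
  · rintro ⟨C, hC0, hCt, hC⟩
    exact ⟨C, hC0, hCt, main C hC⟩
  · rintro ⟨C, hC0, hCt, hae⟩
    refine ⟨C, hC0, hCt, fun x t L hL => ?_⟩
    set A := (⨍⁻ y in pRectMinus n p x t L γ, w y ∂volume) with hA_def
    have h1 : ∀ᵐ z ∂(volume.restrict (pRectPlus n p x t L γ)), C⁻¹ * A ≤ w z := by
      filter_upwards [ae_restrict_mem (measurableSet_pRectPlus n p x t L γ),
        ae_restrict_of_ae hae] with z hzmem hzb
      have hAM : A ≤ MaxMinus n p γ w z :=
        le_iSup_of_le x (le_iSup_of_le t (le_iSup_of_le L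
          (le_iSup_of_le hL (le_iSup_of_le hzmem le_rfl))))
      have h2 : A ≤ C * w z := hAM.trans hzb
      calc C⁻¹ * A ≤ C⁻¹ * (C * w z) := mul_le_mul_right h2 _
        _ = w z := by rw [← mul_assoc, ENNReal.inv_mul_cancel hC0.ne' hCt, one_mul]
    have h3 : C⁻¹ * A ≤ essInf w (volume.restrict (pRectPlus n p x t L γ)) :=
      le_essInf_of_ae_le _ h1
    calc A = C * (C⁻¹ * A) := by
          rw [← mul_assoc, ENNReal.mul_inv_cancel hC0.ne' hCt, one_mul]
      _ ≤ C * essInf w (volume.restrict (pRectPlus n p x t L γ)) := mul_le_mul_right h3 _
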